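/- Fix ε ∈ (0, 1/2) and δ > 0 and set Z₀ = {(ℓ, u) ∈ ℝ² : g_ε(ℓ, u) ≥ δ}, where g_ε(ℓ, u) = ∫₀^∞ max{Φ(u − t) − Φ(ℓ + t) − (1 − ε), 0} dt. Then Z₀ is a closed convex subset of ℝ_{<0} × ℝ_{>0}. -/

import Mathlib

open MeasureTheory Set
open scoped ENNReal NNReal


/-- The standard Gaussian cumulative distribution function. -/
noncomputable def Phi (x : ℝ) : ℝ :=
  (∫ s in Set.Iic x, Real.exp (-s ^ 2 / 2)) / Real.sqrt (2 * Real.pi)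

/-- `g ε ℓ u = ∫₀^∞ max{Φ(u − t) − Φ(ℓ + t) − (1 − ε), 0} dt`. -/
noncomputable def g (ε ℓ u : ℝ) : ℝ :=
  ∫ t in Set.Ioi (0:ℝ), max (Phi (u - t) - Phi (ℓ + t) - (1 - ε)) 0

noncomputable def phi (s : ℝ) : ℝ := Real.exp (-s ^ 2 / 2)

lemma phi_pos (s : ℝ) : 0 < phi s := Real.exp_pos _

lemma continuous_phi : Continuous phi := by
  unfold phi; continuity

lemma integrable_phi : Integrable phi := by
  have h := integrable_exp_neg_mul_sq (by norm_num : (0:ℝ) < 1/2)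
  convert h using 2 with x
  unfold phi; ring_nf

lemma sqrt2pi_pos : 0 < Real.sqrt (2 * Real.pi) :=
  Real.sqrt_pos.mpr (by positivity)

lemma integral_phi : ∫ s, phi s = Real.sqrt (2 * Real.pi) := by
  have h := integral_gaussian (1/2)
  have : ∀ x : ℝ, Real.exp (-(1/2) * x ^ 2) = phi x := by
    intro x; unfold phi; ring_nf
  simp only [this] at h
  rw [h]; rw [show Real.pi/(1/2) = 2*Real.pi by ring]

lemma Phi_eq (x : ℝ) : Phi x = (∫ s in Set.Iic x, phi s) / Real.sqrt (2 * Real.pi) := rfl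

lemma hasDerivAt_Phi (x : ℝ) : HasDerivAt Phi (phi x / Real.sqrt (2 * Real.pi)) x := by
  have hI : ∀ y : ℝ, (∫ s in Set.Iic y, phi s) = (∫ s in Set.Iic (0:ℝ), phi s) + ∫ t in (0:ℝ)..y, phi t := by
    intro y
    rw [← intervalIntegral.integral_Iic_sub_Iic integrable_phi.integrableOn integrable_phi.integrableOn]
    ring
  have h1 : HasDerivAt (fun y => ∫ t in (0:ℝ)..y, phi t) (phi x) x :=
    intervalIntegral.integral_hasDerivAt_right
      (integrable_phi.intervalIntegrable)
      (continuous_phi.stronglyMeasurableAtFilter _ _)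
      continuous_phi.continuousAt
  have h2 : HasDerivAt (fun y => ((∫ s in Set.Iic (0:ℝ), phi s) + ∫ t in (0:ℝ)..y, phi t) / Real.sqrt (2 * Real.pi)) (phi x / Real.sqrt (2 * Real.pi)) x := by
    simpa using ((hasDerivAt_const x (∫ s in Set.Iic (0:ℝ), phi s)).add h1).div_const (Real.sqrt (2*Real.pi))
  refine h2.congr_of_eventuallyEq ?_
  filter_upwards with y
  rw [Phi_eq, hI y]

lemma continuous_Phi : Continuous Phi := by
  have : Differentiable ℝ Phi := fun x => (hasDerivAt_Phi x).differentiableAt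
  exact this.continuous

lemma strictMono_Phi : StrictMono Phi := by
  apply strictMono_of_deriv_pos
  intro x
  rw [(hasDerivAt_Phi x).deriv]
  exact div_pos (phi_pos x) sqrt2pi_pos

lemma Phi_zero : Phi 0 = 1/2 := by
  have hsymm : (∫ s in Set.Iic (0:ℝ), phi s) = ∫ s in Set.Ioi (0:ℝ), phi s := by
    have := integral_comp_neg_Iic (0:ℝ) phi
    have heq : ∀ s : ℝ, phi (-s) = phi s := by intro s; unfold phi; ring_nf
    simp only [heq] at this
    rw [this]; norm_num
  have hadd : (∫ s in Set.Iic (0:ℝ), phi s) + ∫ s in Set.Ioi (0:ℝ), phi s = ∫ s, phi s :=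
    intervalIntegral.integral_Iic_add_Ioi integrable_phi.integrableOn integrable_phi.integrableOn
  rw [integral_phi, ← hsymm] at hadd
  rw [Phi_eq]
  rw [div_eq_iff (ne_of_gt sqrt2pi_pos)]
  linarith

lemma Phi_pos (x : ℝ) : 0 < Phi x := by
  rw [Phi_eq]
  apply div_pos _ sqrt2pi_pos
  rw [MeasureTheory.setIntegral_pos_iff_support_of_nonneg_ae]
  · have : Function.support phi ∩ Set.Iic x = Set.Iic x := by
      rw [Set.inter_eq_right]
      intro s _
      exact (phi_pos s).ne'
    rw [this]
    simp [Real.volume_Iic]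
  · filter_upwards with s using (phi_pos s).le
  · exact integrable_phi.integrableOn

lemma Phi_lt_one (x : ℝ) : Phi x < 1 := by
  rw [Phi_eq, div_lt_one sqrt2pi_pos, ← integral_phi,
    ← intervalIntegral.integral_Iic_add_Ioi (b := x) integrable_phi.integrableOn integrable_phi.integrableOn]
  have : 0 < ∫ s in Set.Ioi x, phi s := by
    rw [MeasureTheory.setIntegral_pos_iff_support_of_nonneg_ae]
    · have : Function.support phi ∩ Set.Ioi x = Set.Ioi x := by
        rw [Set.inter_eq_right]; intro s _; exact (phi_pos s).ne'
      rw [this]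
      simp [Real.volume_Ioi]
    · filter_upwards with s using (phi_pos s).le
    · exact integrable_phi.integrableOn
  linarith

lemma concaveOn_Phi : ConcaveOn ℝ (Set.Ici 0) Phi := by
  apply AntitoneOn.concaveOn_of_deriv (convex_Ici 0) continuous_Phi.continuousOn
  · intro x _; exact (hasDerivAt_Phi x).differentiableAt.differentiableWithinAt
  · rw [interior_Ici]
    intro x hx y hy hxy
    rw [(hasDerivAt_Phi x).deriv, (hasDerivAt_Phi y).deriv]
    rw [div_le_div_iff_of_pos_right sqrt2pi_pos]
    unfold phi
    apply Real.exp_le_exp.mpr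
    nlinarith [(Set.mem_Ioi.mp hx).le, hxy]

lemma convexOn_Phi : ConvexOn ℝ (Set.Iic 0) Phi := by
  apply MonotoneOn.convexOn_of_deriv (convex_Iic 0) continuous_Phi.continuousOn
  · intro x _; exact (hasDerivAt_Phi x).differentiableAt.differentiableWithinAt
  · rw [interior_Iic]
    intro x hx y hy hxy
    simp only [Set.mem_Iio] at hx hy
    rw [(hasDerivAt_Phi x).deriv, (hasDerivAt_Phi y).deriv]
    rw [div_le_div_iff_of_pos_right sqrt2pi_pos]
    unfold phi
    apply Real.exp_le_exp.mpr
    nlinarith [hy.le, hxy]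
noncomputable def f (ε : ℝ) (p : ℝ × ℝ) (t : ℝ) : ℝ :=
  max (Phi (p.2 - t) - Phi (p.1 + t) - (1 - ε)) 0

lemma f_nonneg (ε : ℝ) (p : ℝ × ℝ) (t : ℝ) : 0 ≤ f ε p t := le_max_right _ _

lemma f_le (ε : ℝ) (hε : 0 < ε) (p : ℝ × ℝ) (t : ℝ) : f ε p t ≤ ε := by
  apply max_le _ hε.le
  have h1 := Phi_lt_one (p.2 - t)
  have h2 := Phi_pos (p.1 + t)
  linarith

lemma f_antitone (ε : ℝ) (p : ℝ × ℝ) : Antitone (f ε p) := by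
  intro t t' h
  apply max_le_max _ le_rfl
  have h1 : Phi (p.2 - t') ≤ Phi (p.2 - t) := strictMono_Phi.monotone (by linarith)
  have h2 : Phi (p.1 + t) ≤ Phi (p.1 + t') := strictMono_Phi.monotone (by linarith)
  linarith

lemma f_pos_facts {ε : ℝ} (hε : ε ∈ Set.Ioo (0:ℝ) (1/2)) {p : ℝ × ℝ} {t : ℝ}
    (h : 0 < f ε p t) : p.1 + t < 0 ∧ 0 < p.2 - t := by
  obtain ⟨hε0, hε2⟩ := hε
  have hA : 1 - ε < Phi (p.2 - t) - Phi (p.1 + t) := by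
    by_contra hc
    push_neg at hc
    have : f ε p t = 0 := max_eq_right (by linarith)
    linarith
  have hu : Phi 0 < Phi (p.2 - t) := by
    have := Phi_pos (p.1 + t)
    rw [Phi_zero]; linarith
  have hl : Phi (p.1 + t) < Phi 0 := by
    have := Phi_lt_one (p.2 - t)
    rw [Phi_zero]; linarith
  exact ⟨strictMono_Phi.lt_iff_lt.mp hl, strictMono_Phi.lt_iff_lt.mp hu⟩

lemma f_eq_zero {ε : ℝ} (hε : ε ∈ Set.Ioo (0:ℝ) (1/2)) (p : ℝ × ℝ) {t : ℝ}
    (h : p.2 ≤ t) : f ε p t = 0 := by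
  apply max_eq_right
  have h1 : Phi (p.2 - t) ≤ Phi 0 := strictMono_Phi.monotone (by linarith)
  rw [Phi_zero] at h1
  have h2 := Phi_pos (p.1 + t)
  have := hε.2
  linarith

lemma continuous_f_t (ε : ℝ) (p : ℝ × ℝ) : Continuous (fun t => f ε p t) := by
  unfold f
  have h1 : Continuous fun t : ℝ => Phi (p.2 - t) :=
    continuous_Phi.comp (continuous_const.sub continuous_id)
  have h2 : Continuous fun t : ℝ => Phi (p.1 + t) :=
    continuous_Phi.comp (continuous_const.add continuous_id)
  exact ((h1.sub h2).sub continuous_const).max continuous_const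

lemma continuous_f_p (ε : ℝ) (t : ℝ) : Continuous (fun p : ℝ × ℝ => f ε p t) := by
  unfold f
  have h1 : Continuous fun p : ℝ × ℝ => Phi (p.2 - t) :=
    continuous_Phi.comp (continuous_snd.sub continuous_const)
  have h2 : Continuous fun p : ℝ × ℝ => Phi (p.1 + t) :=
    continuous_Phi.comp (continuous_fst.add continuous_const)
  exact ((h1.sub h2).sub continuous_const).max continuous_const

lemma f_concave {ε : ℝ} (hε : ε ∈ Set.Ioo (0:ℝ) (1/2)) {p q : ℝ × ℝ} {t₁ t₂ l m : ℝ}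
    (hl : 0 ≤ l) (hm : 0 ≤ m) (hlm : l + m = 1)
    (hp : 0 < f ε p t₁) (hq : 0 < f ε q t₂) :
    l * f ε p t₁ + m * f ε q t₂ ≤ f ε (l • p + m • q) (l * t₁ + m * t₂) := by
  obtain ⟨hp1, hp2⟩ := f_pos_facts hε hp
  obtain ⟨hq1, hq2⟩ := f_pos_facts hε hq
  have hr1 : (l • p + m • q).1 = l * p.1 + m * q.1 := rfl
  have hr2 : (l • p + m • q).2 = l * p.2 + m * q.2 := rfl
  have hcu : l * Phi (p.2 - t₁) + m * Phi (q.2 - t₂) ≤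
      Phi ((l * p.2 + m * q.2) - (l * t₁ + m * t₂)) := by
    have := concaveOn_Phi.2 (Set.mem_Ici.mpr hp2.le) (Set.mem_Ici.mpr hq2.le) hl hm hlm
    simp only [smul_eq_mul] at this
    convert this using 2
    · rfl
    ring
  have hcl : Phi ((l * p.1 + m * q.1) + (l * t₁ + m * t₂)) ≤
      l * Phi (p.1 + t₁) + m * Phi (q.1 + t₂) := by
    have := convexOn_Phi.2 (Set.mem_Iic.mpr hp1.le) (Set.mem_Iic.mpr hq1.le) hl hm hlm
    simp only [smul_eq_mul] at this
    convert this using 2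
    · rfl
    ring
  have hfp : f ε p t₁ = Phi (p.2 - t₁) - Phi (p.1 + t₁) - (1 - ε) := by
    unfold f at hp ⊢
    rcases max_cases (Phi (p.2 - t₁) - Phi (p.1 + t₁) - (1 - ε)) 0 with ⟨h1, _⟩ | ⟨h1, h2⟩
    · exact h1
    · rw [h1] at hp; linarith
  have hfq : f ε q t₂ = Phi (q.2 - t₂) - Phi (q.1 + t₂) - (1 - ε) := by
    unfold f at hq ⊢
    rcases max_cases (Phi (q.2 - t₂) - Phi (q.1 + t₂) - (1 - ε)) 0 with ⟨h1, _⟩ | ⟨h1, h2⟩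
    · exact h1
    · rw [h1] at hq; linarith
  have : l * f ε p t₁ + m * f ε q t₂ ≤
      Phi ((l • p + m • q).2 - (l * t₁ + m * t₂)) - Phi ((l • p + m • q).1 + (l * t₁ + m * t₂)) - (1 - ε) := by
    rw [hfp, hfq, hr1, hr2]
    have he : l * (1 - ε) + m * (1 - ε) = 1 - ε := by rw [← add_mul, hlm, one_mul]
    linarith [hcu, hcl]
  exact le_trans this (le_max_left _ _)
def Aset (ε : ℝ) (p : ℝ × ℝ) (y : ℝ) : Set ℝ := {t | 0 < t ∧ y < f ε p t}

lemma Aset_subset {ε : ℝ} (hε : ε ∈ Set.Ioo (0:ℝ) (1/2)) {p : ℝ × ℝ} {y : ℝ} (hy : 0 ≤ y) :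
    Aset ε p y ⊆ Set.Ioo 0 p.2 := by
  rintro t ⟨ht0, hty⟩
  have := f_pos_facts hε (lt_of_le_of_lt hy hty)
  exact ⟨ht0, by linarith [this.2]⟩

lemma Aset_bddAbove {ε : ℝ} (hε : ε ∈ Set.Ioo (0:ℝ) (1/2)) {p : ℝ × ℝ} {y : ℝ} (hy : 0 ≤ y) :
    BddAbove (Aset ε p y) :=
  ⟨p.2, fun _ ht => ((Aset_subset hε hy) ht).2.le⟩

lemma sSup_Aset_pos {ε : ℝ} (hε : ε ∈ Set.Ioo (0:ℝ) (1/2)) {p : ℝ × ℝ} {y : ℝ} (hy : 0 ≤ y)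
    (hne : (Aset ε p y).Nonempty) : 0 < sSup (Aset ε p y) := by
  obtain ⟨t, ht⟩ := hne
  exact lt_of_lt_of_le ht.1 (le_csSup (Aset_bddAbove hε hy) ht)

lemma vol_Aset {ε : ℝ} (hε : ε ∈ Set.Ioo (0:ℝ) (1/2)) {p : ℝ × ℝ} {y : ℝ} (hy : 0 ≤ y)
    (hne : (Aset ε p y).Nonempty) :
    volume (Aset ε p y) = ENNReal.ofReal (sSup (Aset ε p y)) := by
  set c := sSup (Aset ε p y) with hc
  have hbdd := Aset_bddAbove hε (p := p) hy
  have hsub1 : Set.Ioo 0 c ⊆ Aset ε p y := by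
    rintro t ⟨ht0, htc⟩
    obtain ⟨t', ht', hlt⟩ := exists_lt_of_lt_csSup hne htc
    exact ⟨ht0, lt_of_lt_of_le ht'.2 (f_antitone ε p hlt.le)⟩
  have hsub2 : Aset ε p y ⊆ Set.Ioc 0 c := fun t ht => ⟨ht.1, le_csSup hbdd ht⟩
  apply le_antisymm
  · calc volume (Aset ε p y) ≤ volume (Set.Ioc 0 c) := measure_mono hsub2
      _ = ENNReal.ofReal c := by rw [Real.volume_Ioc, sub_zero]
  · calc ENNReal.ofReal c = volume (Set.Ioo 0 c) := by rw [Real.volume_Ioo, sub_zero]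
      _ ≤ volume (Aset ε p y) := measure_mono hsub1

lemma Aset_nonempty {ε : ℝ} {p : ℝ × ℝ} {y : ℝ} (h : y < f ε p 0) : (Aset ε p y).Nonempty := by
  have hcont : ContinuousAt (fun t => f ε p t) 0 := (continuous_f_t ε p).continuousAt
  have hev : ∀ᶠ t in nhds (0:ℝ), y < f ε p t := hcont.eventually_const_lt h
  have : ∀ᶠ t in nhdsWithin (0:ℝ) (Set.Ioi 0), y < f ε p t := hev.filter_mono nhdsWithin_le_nhds
  obtain ⟨t, h1, h2⟩ := (this.and self_mem_nhdsWithin).exists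
  exact ⟨t, h2, h1⟩

lemma Aset_empty {ε : ℝ} {p : ℝ × ℝ} {y : ℝ} (h : f ε p 0 ≤ y) : Aset ε p y = ∅ := by
  ext t
  simp only [Aset, Set.mem_setOf_eq, Set.mem_empty_iff_false, iff_false, not_and, not_lt]
  intro ht0
  exact le_trans (f_antitone ε p ht0.le) h

noncomputable def G (ε : ℝ) (p : ℝ × ℝ) : ℝ≥0∞ :=
  ∫⁻ t in Set.Ioi (0:ℝ), ENNReal.ofReal (f ε p t)

lemma G_layercake (ε : ℝ) (p : ℝ × ℝ) :
    G ε p = ∫⁻ y in Set.Ioi (0:ℝ), volume (Aset ε p y) := by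
  rw [G, lintegral_eq_lintegral_meas_lt (volume.restrict (Set.Ioi 0))
    (Filter.Eventually.of_forall (f_nonneg ε p))
    (continuous_f_t ε p).measurable.aemeasurable]
  apply setLIntegral_congr_fun measurableSet_Ioi
  intro y _
  beta_reduce
  rw [Measure.restrict_apply' measurableSet_Ioi]
  congr 1
  ext t
  simp only [Set.mem_inter_iff, Set.mem_setOf_eq, Set.mem_Ioi, Aset]
  tauto

lemma measurable_volA (ε : ℝ) (p : ℝ × ℝ) : Measurable fun y => volume (Aset ε p y) := by
  apply Antitone.measurable
  intro y y' h
  apply measure_mono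
  rintro t ⟨ht0, hty⟩
  exact ⟨ht0, lt_of_le_of_lt h hty⟩

lemma G_lt_top {ε : ℝ} (hε : ε ∈ Set.Ioo (0:ℝ) (1/2)) (p : ℝ × ℝ) : G ε p < ⊤ := by
  set B := max p.2 1 with hB
  have hbound : ∀ t ∈ Set.Ioi (0:ℝ), ENNReal.ofReal (f ε p t) ≤
      (Set.Ioc (0:ℝ) B).indicator (fun _ => ENNReal.ofReal ε) t := by
    intro t ht
    rcases le_or_gt t B with h | h
    · rw [Set.indicator_of_mem (Set.mem_Ioc.mpr ⟨ht, h⟩)]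
      exact ENNReal.ofReal_le_ofReal (f_le ε hε.1 p t)
    · rw [Set.indicator_of_notMem (fun hc => absurd hc.2 (not_le.mpr h))]
      rw [f_eq_zero hε p (le_trans (le_max_left _ _) h.le)]
      simp
  calc G ε p ≤ ∫⁻ t in Set.Ioi (0:ℝ), (Set.Ioc (0:ℝ) B).indicator (fun _ => ENNReal.ofReal ε) t :=
        setLIntegral_mono ((measurable_const (a := ENNReal.ofReal ε)).indicator measurableSet_Ioc) hbound
    _ ≤ ∫⁻ t, (Set.Ioc (0:ℝ) B).indicator (fun _ => ENNReal.ofReal ε) t :=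
        setLIntegral_le_lintegral _ _
    _ = ENNReal.ofReal ε * volume (Set.Ioc (0:ℝ) B) := by
        rw [lintegral_indicator measurableSet_Ioc, setLIntegral_const]
    _ < ⊤ := by
        apply ENNReal.mul_lt_top ENNReal.ofReal_lt_top
        rw [Real.volume_Ioc]
        exact ENNReal.ofReal_lt_top

lemma g_eq (ε : ℝ) (p : ℝ × ℝ) : g ε p.1 p.2 = (G ε p).toReal := by
  rw [show g ε p.1 p.2 = ∫ t in Set.Ioi (0:ℝ), f ε p t from rfl, G]
  exact integral_eq_lintegral_of_nonneg_ae
    (Filter.Eventually.of_forall (f_nonneg ε p))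
    (continuous_f_t ε p).aestronglyMeasurable

lemma ofReal_le_G {ε δ : ℝ} (hε : ε ∈ Set.Ioo (0:ℝ) (1/2)) {p : ℝ × ℝ}
    (h : δ ≤ g ε p.1 p.2) : ENNReal.ofReal δ ≤ G ε p := by
  rw [g_eq] at h
  calc ENNReal.ofReal δ ≤ ENNReal.ofReal (G ε p).toReal := ENNReal.ofReal_le_ofReal h
    _ = G ε p := ENNReal.ofReal_toReal (G_lt_top hε p).ne

lemma le_g_of_G {ε δ : ℝ} (hε : ε ∈ Set.Ioo (0:ℝ) (1/2)) (hδ : 0 ≤ δ) {p : ℝ × ℝ}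
    (h : ENNReal.ofReal δ ≤ G ε p) : δ ≤ g ε p.1 p.2 := by
  rw [g_eq]
  calc δ = (ENNReal.ofReal δ).toReal := (ENNReal.toReal_ofReal hδ).symm
    _ ≤ (G ε p).toReal := ENNReal.toReal_mono (G_lt_top hε p).ne h

lemma f_zero_pos_of_G {ε δ : ℝ} (hδ : 0 < δ) {p : ℝ × ℝ}
    (h : ENNReal.ofReal δ ≤ G ε p) : 0 < f ε p 0 := by
  rcases lt_or_ge 0 (f ε p 0) with h' | h'
  · exact h'
  have h0 : f ε p 0 = 0 := le_antisymm h' (f_nonneg ε p 0)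
  have : G ε p = 0 := by
    rw [G]
    rw [setLIntegral_congr_fun measurableSet_Ioi
      (fun t (ht : t ∈ Set.Ioi (0:ℝ)) => ?_), lintegral_zero]
    have h1 : f ε p t ≤ 0 := h0 ▸ f_antitone ε p (le_of_lt ht)
    have h2 := f_nonneg ε p t
    rw [show f ε p t = 0 from le_antisymm h1 h2]
    simp
  rw [this] at h
  simp only [nonpos_iff_eq_zero, ENNReal.ofReal_eq_zero] at h
  linarith

lemma scale_lintegral {T : ℝ → ℝ≥0∞} (hT : Measurable T) {α : ℝ} (hα : 0 < α) :
    ∫⁻ y in Set.Ioi (0:ℝ), T (α * y) = ENNReal.ofReal α⁻¹ * ∫⁻ z in Set.Ioi (0:ℝ), T z := by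
  have hmap := Real.map_volume_mul_left (ne_of_gt hα)
  have hpre : (fun y : ℝ => α * y) ⁻¹' (Set.Ioi 0) = Set.Ioi 0 := by
    ext y
    simp only [Set.mem_preimage, Set.mem_Ioi]
    constructor
    · intro h; by_contra hy; push_neg at hy; nlinarith
    · intro h; exact mul_pos hα h
  calc ∫⁻ y in Set.Ioi (0:ℝ), T (α * y)
      = ∫⁻ y, T (α * y) ∂(volume.restrict ((fun y : ℝ => α * y) ⁻¹' (Set.Ioi 0))) := by
        rw [hpre]
    _ = ∫⁻ z, T z ∂(Measure.map (fun y : ℝ => α * y)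
          (volume.restrict ((fun y : ℝ => α * y) ⁻¹' (Set.Ioi 0)))) :=
        (lintegral_map hT (measurable_const_mul α)).symm
    _ = ∫⁻ z, T z ∂((Measure.map (fun y : ℝ => α * y) volume).restrict (Set.Ioi 0)) := by
        rw [Measure.restrict_map (measurable_const_mul α) measurableSet_Ioi]
    _ = ∫⁻ z, T z ∂((ENNReal.ofReal |α⁻¹| • volume).restrict (Set.Ioi 0)) := by
        rw [hmap]
    _ = ENNReal.ofReal α⁻¹ * ∫⁻ z in Set.Ioi (0:ℝ), T z := by
        rw [Measure.restrict_smul, lintegral_smul_measure, abs_of_pos (inv_pos.mpr hα), smul_eq_mul]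
lemma G_combo {ε δ : ℝ} (hε : ε ∈ Set.Ioo (0:ℝ) (1/2)) (hδ : 0 < δ) {p q : ℝ × ℝ} {l m : ℝ}
    (hl : 0 ≤ l) (hm : 0 ≤ m) (hlm : l + m = 1)
    (hp : ENNReal.ofReal δ ≤ G ε p) (hq : ENNReal.ofReal δ ≤ G ε q) :
    ENNReal.ofReal δ ≤ G ε (l • p + m • q) := by
  rcases hl.eq_or_lt with h0 | hl'
  · rw [← h0, zero_smul, zero_add]
    have hm1 : m = 1 := by linarith
    rw [hm1, one_smul]; exact hq
  rcases hm.eq_or_lt with h0 | hm'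
  · rw [← h0, zero_smul, add_zero]
    have hl1 : l = 1 := by linarith
    rw [hl1, one_smul]; exact hp
  set r := l • p + m • q with hr
  have ha : 0 < f ε p 0 := f_zero_pos_of_G hδ hp
  have hb : 0 < f ε q 0 := f_zero_pos_of_G hδ hq
  set a := f ε p 0 with hadef
  set b := f ε q 0 with hbdef
  set M := l * a + m * b with hMdef
  have hM : 0 < M := add_pos (mul_pos hl' ha) (mul_pos hm' hb)
  set α := a / M with hαdef
  set β := b / M with hβdef
  have hα : 0 < α := div_pos ha hM
  have hβ : 0 < β := div_pos hb hM
  have key : ∀ y ∈ Set.Ioi (0:ℝ),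
      ENNReal.ofReal l * volume (Aset ε p (α * y)) + ENNReal.ofReal m * volume (Aset ε q (β * y))
        ≤ volume (Aset ε r y) := by
    intro y hy
    simp only [Set.mem_Ioi] at hy
    rcases le_or_gt M y with hyM | hyM
    · have h1 : Aset ε p (α * y) = ∅ := by
        apply Aset_empty
        rw [hαdef, div_mul_eq_mul_div, le_div_iff₀ hM]
        nlinarith
      have h2 : Aset ε q (β * y) = ∅ := by
        apply Aset_empty
        rw [hβdef, div_mul_eq_mul_div, le_div_iff₀ hM]
        nlinarith
      rw [h1, h2]
      simp
    · have hαy0 : 0 ≤ α * y := by positivity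
      have hβy0 : 0 ≤ β * y := by positivity
      have hαy : α * y < a := by
        rw [hαdef, div_mul_eq_mul_div, div_lt_iff₀ hM]; nlinarith
      have hβy : β * y < b := by
        rw [hβdef, div_mul_eq_mul_div, div_lt_iff₀ hM]; nlinarith
      have hne1 : (Aset ε p (α*y)).Nonempty := Aset_nonempty hαy
      have hne2 : (Aset ε q (β*y)).Nonempty := Aset_nonempty hβy
      have hy_eq : l * (α * y) + m * (β * y) = y := by
        rw [hαdef, hβdef]
        field_simp
        rw [hMdef]
      have hmem : ∀ t₁ ∈ Aset ε p (α*y), ∀ t₂ ∈ Aset ε q (β*y),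
          l * t₁ + m * t₂ ∈ Aset ε r y := by
        intro t₁ ht₁ t₂ ht₂
        refine ⟨add_pos (mul_pos hl' ht₁.1) (mul_pos hm' ht₂.1), ?_⟩
        have hfp : 0 < f ε p t₁ := lt_of_le_of_lt hαy0 ht₁.2
        have hfq : 0 < f ε q t₂ := lt_of_le_of_lt hβy0 ht₂.2
        calc y = l * (α * y) + m * (β * y) := hy_eq.symm
          _ < l * f ε p t₁ + m * f ε q t₂ :=
            add_lt_add (mul_lt_mul_of_pos_left ht₁.2 hl') (mul_lt_mul_of_pos_left ht₂.2 hm')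
          _ ≤ f ε r (l * t₁ + m * t₂) := f_concave hε hl hm hlm hfp hfq
      have hne3 : (Aset ε r y).Nonempty := by
        obtain ⟨t₁, ht₁⟩ := hne1
        obtain ⟨t₂, ht₂⟩ := hne2
        exact ⟨_, hmem t₁ ht₁ t₂ ht₂⟩
      have hS₁pos := sSup_Aset_pos hε hαy0 hne1
      have hS₂pos := sSup_Aset_pos hε hβy0 hne2
      have hbddr : BddAbove (Aset ε r y) := Aset_bddAbove hε hy.le
      set S₁ := sSup (Aset ε p (α*y))
      set S₂ := sSup (Aset ε q (β*y))
      set Sr := sSup (Aset ε r y)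
      have hsum : l * S₁ + m * S₂ ≤ Sr := by
        have h2 : ∀ t₁ ∈ Aset ε p (α*y), l * t₁ + m * S₂ ≤ Sr := by
          intro t₁ ht₁
          have hS2 : S₂ ≤ (Sr - l * t₁) / m := by
            apply csSup_le hne2
            intro t₂ ht₂
            rw [le_div_iff₀ hm']
            have := le_csSup hbddr (hmem t₁ ht₁ t₂ ht₂)
            linarith
          rw [le_div_iff₀ hm'] at hS2
          linarith
        have h3 : S₁ ≤ (Sr - m * S₂) / l := by
          apply csSup_le hne1
          intro t₁ ht₁
          rw [le_div_iff₀ hl']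
          have := h2 t₁ ht₁
          linarith
        rw [le_div_iff₀ hl'] at h3
        linarith
      rw [vol_Aset hε hαy0 hne1, vol_Aset hε hβy0 hne2, vol_Aset hε hy.le hne3]
      calc ENNReal.ofReal l * ENNReal.ofReal S₁ + ENNReal.ofReal m * ENNReal.ofReal S₂
          = ENNReal.ofReal (l * S₁ + m * S₂) := by
            rw [← ENNReal.ofReal_mul hl, ← ENNReal.ofReal_mul hm,
              ← ENNReal.ofReal_add (mul_nonneg hl hS₁pos.le) (mul_nonneg hm hS₂pos.le)]
        _ ≤ ENNReal.ofReal Sr := ENNReal.ofReal_le_ofReal hsum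
  have hmeasp : Measurable fun y => volume (Aset ε p (α * y)) :=
    (measurable_volA ε p).comp (measurable_const_mul α)
  have hmeasq : Measurable fun y => volume (Aset ε q (β * y)) :=
    (measurable_volA ε q).comp (measurable_const_mul β)
  have hcoef : (1:ℝ) ≤ l * α⁻¹ + m * β⁻¹ := by
    have hαi : α⁻¹ = M / a := by rw [hαdef, inv_div]
    have hβi : β⁻¹ = M / b := by rw [hβdef, inv_div]
    rw [hαi, hβi]
    have expand : a * b * (l * (M/a) + m * (M/b)) = l * M * b + m * M * a := by
      field_simp
    have key2 : a * b * 1 ≤ a * b * (l * (M/a) + m * (M/b)) := by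
      rw [expand, hMdef]
      have hid : l * (l*a+m*b) * b + m*(l*a+m*b)*a - a*b*1
          = l*m*(a-b)^2 + a*b*((l+m)^2 - 1) := by ring
      have h4 : a*b*((l+m)^2 - 1) = 0 := by rw [hlm]; ring
      have hX : 0 ≤ l*m*(a-b)^2 := mul_nonneg (mul_nonneg hl hm) (sq_nonneg (a-b))
      linarith [hid, h4, hX]
    exact le_of_mul_le_mul_left (by linarith) (by positivity : 0 < a * b)
  calc ENNReal.ofReal δ = 1 * ENNReal.ofReal δ := (one_mul _).symm
    _ ≤ ENNReal.ofReal (l * α⁻¹ + m * β⁻¹) * ENNReal.ofReal δ := by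
        apply mul_le_mul_left
        calc (1:ℝ≥0∞) = ENNReal.ofReal 1 := ENNReal.ofReal_one.symm
          _ ≤ _ := ENNReal.ofReal_le_ofReal hcoef
    _ = ENNReal.ofReal (l * α⁻¹) * ENNReal.ofReal δ
          + ENNReal.ofReal (m * β⁻¹) * ENNReal.ofReal δ := by
        rw [ENNReal.ofReal_add (by positivity) (by positivity), add_mul]
    _ ≤ ENNReal.ofReal (l * α⁻¹) * G ε p + ENNReal.ofReal (m * β⁻¹) * G ε q := by
        exact add_le_add (mul_le_mul_right hp _) (mul_le_mul_right hq _)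
    _ = ENNReal.ofReal l * (ENNReal.ofReal α⁻¹ * G ε p)
          + ENNReal.ofReal m * (ENNReal.ofReal β⁻¹ * G ε q) := by
        rw [ENNReal.ofReal_mul hl, ENNReal.ofReal_mul hm, mul_assoc, mul_assoc]
    _ = ENNReal.ofReal l * (∫⁻ y in Set.Ioi (0:ℝ), volume (Aset ε p (α * y)))
          + ENNReal.ofReal m * (∫⁻ y in Set.Ioi (0:ℝ), volume (Aset ε q (β * y))) := by
        rw [G_layercake ε p, G_layercake ε q,
          scale_lintegral (measurable_volA ε p) hα, scale_lintegral (measurable_volA ε q) hβ]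
    _ = ∫⁻ y in Set.Ioi (0:ℝ), (ENNReal.ofReal l * volume (Aset ε p (α * y))
          + ENNReal.ofReal m * volume (Aset ε q (β * y))) := by
        rw [lintegral_add_left (hmeasp.const_mul _),
          lintegral_const_mul _ hmeasp, lintegral_const_mul _ hmeasq]
    _ ≤ ∫⁻ y in Set.Ioi (0:ℝ), volume (Aset ε r y) := setLIntegral_mono' measurableSet_Ioi key
    _ = G ε r := (G_layercake ε r).symm

theorem stmt_15 (ε δ : ℝ) (hε : ε ∈ Set.Ioo (0:ℝ) (1/2)) (hδ : 0 < δ) :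
    let Z₀ : Set (ℝ × ℝ) := {p | δ ≤ g ε p.1 p.2}
    IsClosed Z₀ ∧ Convex ℝ Z₀ ∧ Z₀ ⊆ {p : ℝ × ℝ | p.1 < 0 ∧ 0 < p.2} := by
  intro Z₀
  refine ⟨?_, ?_, ?_⟩
  · have hcont : Continuous fun p : ℝ × ℝ => g ε p.1 p.2 := by
      rw [continuous_iff_continuousAt]
      intro p₀
      have heq : (fun p : ℝ × ℝ => g ε p.1 p.2) = fun p => ∫ t in Set.Ioi (0:ℝ), f ε p t := rfl
      rw [heq]
      set B := max p₀.2 0 + 1 with hB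
      apply continuousAt_of_dominated (bound := (Set.Ioc (0:ℝ) B).indicator fun _ => ε)
      · filter_upwards with p using (continuous_f_t ε p).aestronglyMeasurable
      · have hopen : IsOpen {p : ℝ × ℝ | p.2 < B} := isOpen_lt continuous_snd continuous_const
        have hmem : p₀ ∈ {p : ℝ × ℝ | p.2 < B} := by
          simp only [Set.mem_setOf_eq, hB]
          linarith [le_max_left p₀.2 0]
        filter_upwards [hopen.mem_nhds hmem] with p hp
        apply (ae_restrict_iff' measurableSet_Ioi).mpr
        filter_upwards with t ht
        rw [Real.norm_eq_abs, abs_of_nonneg (f_nonneg ε p t)]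
        rcases le_or_gt t B with h | h
        · rw [Set.indicator_of_mem (Set.mem_Ioc.mpr ⟨ht, h⟩)]
          exact f_le ε hε.1 p t
        · rw [Set.indicator_of_notMem (fun hc => absurd hc.2 (not_le.mpr h))]
          rw [f_eq_zero hε p (le_of_lt (lt_trans hp h))]
      · rw [integrable_indicator_iff measurableSet_Ioc]
        apply (integrableOn_const_iff).mpr
        right
        refine lt_of_le_of_lt (Measure.le_iff'.1 Measure.restrict_le_self _) ?_
        rw [Real.volume_Ioc]
        exact ENNReal.ofReal_lt_top
      · filter_upwards with t using (continuous_f_p ε t).continuousAt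
    have hZ : Z₀ = (fun p : ℝ × ℝ => g ε p.1 p.2) ⁻¹' (Set.Ici δ) := rfl
    rw [hZ]
    exact isClosed_Ici.preimage hcont
  · intro p hp q hq l m hl hm hlm
    have h1 : ENNReal.ofReal δ ≤ G ε p := ofReal_le_G hε hp
    have h2 : ENNReal.ofReal δ ≤ G ε q := ofReal_le_G hε hq
    exact le_g_of_G hε hδ.le (G_combo hε hδ hl hm hlm h1 h2)
  · intro p hp
    have hgp : δ ≤ g ε p.1 p.2 := hp
    have hex : ∃ t, 0 < t ∧ 0 < f ε p t := by
      by_contra hc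
      push_neg at hc
      have hzero : Set.EqOn (fun t => f ε p t) (fun _ => (0:ℝ)) (Set.Ioi 0) := by
        intro t ht
        exact le_antisymm (hc t ht) (f_nonneg ε p t)
      have : g ε p.1 p.2 = 0 := by
        rw [show g ε p.1 p.2 = ∫ t in Set.Ioi (0:ℝ), f ε p t from rfl,
          setIntegral_congr_fun measurableSet_Ioi hzero, integral_zero]
      linarith
    obtain ⟨t, ht0, htf⟩ := hex
    obtain ⟨h1, h2⟩ := f_pos_facts hε htf
    exact ⟨by linarith, by linarith⟩
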